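/- Let G be a finite graph and v a vertex. Every closed walk of length k in the unraveled ball G̃(v,r) starting at the root projects (by taking terminal vertices of the non-backtracking walks) to a closed walk of length k in the ball G(v,r) starting at v, and this projection is injective; consequently the number of closed walks of length k at v in G(v,r) is at least the number of closed walks of length k at the root in G̃(v,r). -/

import Mathlib

open Classical Real Filter SimpleGraph

/-- The multiset of adjacency eigenvalues of a finite simple graph, indexed by vertices. -/
noncomputable def adjEigs {V : Type*} [Fintype V] (G : SimpleGraph V) : V → ℝ :=
  Matrix.IsHermitian.eigenvalues (A := G.adjMatrix ℝ)
    (by rw [Matrix.IsHermitian, Matrix.conjTranspose_eq_transpose_of_trivial]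
        exact SimpleGraph.isSymm_adjMatrix G)

/-- The spectral radius (largest adjacency eigenvalue) of a finite simple graph. -/
noncomputable def lam1 {V : Type*} [Fintype V] (G : SimpleGraph V) : ℝ := ⨆ v, adjEigs G v

/-- The second largest adjacency eigenvalue (with multiplicity) of a finite simple graph. -/
noncomputable def lam2 {V : Type*} [Fintype V] (G : SimpleGraph V) : ℝ :=
  ⨆ p : {p : V × V // p.1 ≠ p.2}, min (adjEigs G p.1.1) (adjEigs G p.1.2)

/-- A non-backtracking walk of length `≤ r` starting at `v`: recorded as its list of
vertices (of length `≤ r + 1`, starting with `v`). -/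
structure NBWalk {V : Type*} (G : SimpleGraph V) (v : V) (r : ℕ) where
  toList : List V
  ne_nil : toList ≠ []
  head_eq : toList.head ne_nil = v
  length_le : toList.length ≤ r + 1
  chain : toList.Chain' G.Adj
  nonback : ∀ i : ℕ, ∀ h : i + 2 < toList.length,
    toList.get ⟨i, by omega⟩ ≠ toList.get ⟨i + 2, h⟩

/-- The unraveled ball of radius `r` centered at `v`: vertices are the non-backtracking
walks of length `≤ r` starting at `v`, two walks adjacent iff one is a one-step
extension of the other. -/
def unravBall {V : Type*} (G : SimpleGraph V) (v : V) (r : ℕ) : SimpleGraph (NBWalk G v r) :=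
  SimpleGraph.fromRel (fun w w' => ∃ x, w'.toList = w.toList ++ [x])

noncomputable instance {V : Type*} [Fintype V] {G : SimpleGraph V} {v : V} {r : ℕ} :
    Fintype (NBWalk G v r) :=
  haveI : Finite {l : List V // l.length ≤ r + 1} :=
    (List.finite_length_le V (r + 1)).to_subtype
  haveI : Finite (NBWalk G v r) := Finite.of_injective
    (fun w => (⟨w.toList, w.length_le⟩ : {l : List V // l.length ≤ r + 1}))
    (by rintro ⟨⟩ ⟨⟩ h; simp_all)
  Fintype.ofFinite _

/-- The root of the unraveled ball: the length-`0` walk `(v)`. -/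
def nbRoot {V : Type*} (G : SimpleGraph V) (v : V) (r : ℕ) : NBWalk G v r :=
  ⟨[v], by simp, rfl, by simp, List.isChain_singleton v, by intro i h; simp at h⟩

/-- The terminal vertex of a non-backtracking walk. -/
def NBWalk.term {V : Type*} {G : SimpleGraph V} {v : V} {r : ℕ} (w : NBWalk G v r) : V :=
  w.toList.getLast w.ne_nil

section Aux

variable {V : Type*} {G : SimpleGraph V} {v : V} {r : ℕ}

lemma NBWalk.ext' {a b : NBWalk G v r} (h : a.toList = b.toList) : a = b := by
  cases a; cases b; simp_all

/-- The terminal vertex of a one-step extension differs from the terminal vertex of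
the one-step truncation (non-backtracking). -/
lemma term_ne_of_ext_trunc {w a b : NBWalk G v r} {x y : V}
    (hax : a.toList = w.toList ++ [x]) (hby : w.toList = b.toList ++ [y]) :
    a.term ≠ b.term := by
  have hb0 : b.toList.length ≠ 0 := fun h => b.ne_nil (List.length_eq_zero_iff.1 h)
  obtain ⟨m, hm⟩ : ∃ m, b.toList.length = m + 1 :=
    ⟨b.toList.length - 1, by omega⟩
  have hal : a.toList = b.toList ++ [y, x] := by rw [hax, hby]; simp
  have hlen : a.toList.length = m + 3 := by rw [hal]; simp [hm]
  have hlt : m + 2 < a.toList.length := by omega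
  have hterm_a : a.term = x := by
    rw [NBWalk.term]; simp_rw [hax]; exact List.getLast_concat
  have h1 : a.toList[m]'(by omega) = b.term := by
    simp_rw [hal]
    rw [List.getElem_append_left (by omega)]
    rw [NBWalk.term, List.getLast_eq_getElem]
    simp only [hm, Nat.add_sub_cancel]
  have h2 : a.toList[m + 2]'(by omega) = x := by
    simp_rw [hal]
    rw [List.getElem_append_right (by simp [hm])]
    simp [hm]
  have key := a.nonback m hlt
  rw [List.get_eq_getElem, List.get_eq_getElem] at key
  intro hcontra
  exact key (by rw [h1, h2, ← hterm_a, hcontra])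

lemma unravBall_adj {a b : NBWalk G v r} :
    (unravBall G v r).Adj a b ↔ a ≠ b ∧
      ((∃ x, b.toList = a.toList ++ [x]) ∨ (∃ x, a.toList = b.toList ++ [x])) :=
  SimpleGraph.fromRel_adj _ a b

/-- Adjacent unraveled-ball vertices have adjacent terminal vertices. -/
lemma adj_term {a b : NBWalk G v r} (h : (unravBall G v r).Adj a b) :
    G.Adj a.term b.term := by
  rw [unravBall_adj] at h
  obtain ⟨-, h | h⟩ := h
  · obtain ⟨x, hx⟩ := h
    have hterm : b.term = x := by rw [NBWalk.term]; simp_rw [hx]; exact List.getLast_concat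
    have := b.chain
    rw [hx, List.Chain', List.isChain_append] at this
    have := this.2.2 a.term (List.getLast?_eq_getLast a.ne_nil) x rfl
    rwa [hterm]
  · obtain ⟨x, hx⟩ := h
    have hterm : a.term = x := by rw [NBWalk.term]; simp_rw [hx]; exact List.getLast_concat
    have := a.chain
    rw [hx, List.Chain', List.isChain_append] at this
    have := this.2.2 b.term (List.getLast?_eq_getLast b.ne_nil) x rfl
    rw [hterm]
    exact this.symm

/-- Among neighbours of `w` in the unraveled ball, the terminal vertex determines the
neighbour. -/
lemma neighbor_term_inj {w a b : NBWalk G v r}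
    (ha : (unravBall G v r).Adj w a) (hb : (unravBall G v r).Adj w b)
    (h : a.term = b.term) : a = b := by
  rw [unravBall_adj] at ha hb
  obtain ⟨-, ha | ha⟩ := ha <;> obtain ⟨-, hb | hb⟩ := hb
  · obtain ⟨x, hx⟩ := ha; obtain ⟨y, hy⟩ := hb
    have hx' : a.term = x := by rw [NBWalk.term]; simp_rw [hx]; exact List.getLast_concat
    have hy' : b.term = y := by rw [NBWalk.term]; simp_rw [hy]; exact List.getLast_concat
    exact NBWalk.ext' (by rw [hx, hy, ← hx', ← hy', h])
  · obtain ⟨x, hx⟩ := ha; obtain ⟨y, hy⟩ := hb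
    exact absurd h (term_ne_of_ext_trunc hx hy)
  · obtain ⟨x, hx⟩ := ha; obtain ⟨y, hy⟩ := hb
    exact absurd h.symm (term_ne_of_ext_trunc hy hx)
  · obtain ⟨x, hx⟩ := ha; obtain ⟨y, hy⟩ := hb
    exact NBWalk.ext' (List.append_inj' (hx.symm.trans hy) rfl).1

/-- A walk in the unraveled ball is determined by its endpoints together with the list of
terminal vertices along its support. -/
lemma walk_term_inj {a b : NBWalk G v r} (p : (unravBall G v r).Walk a b) :
    ∀ q : (unravBall G v r).Walk a b,
      p.support.map NBWalk.term = q.support.map NBWalk.term → p = q := by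
  induction p with
  | nil =>
    intro q h
    cases q with
    | nil => rfl
    | cons hq q' => simp [Walk.support_cons] at h
  | @cons u u' b hp p' ih =>
    intro q h
    cases q with
    | nil => simp [Walk.support_cons] at h
    | @cons _ u'' _ hq q' =>
      rw [Walk.support_cons, Walk.support_cons, List.map_cons, List.map_cons] at h
      have htail := (List.cons.injEq _ _ _ _ ▸ h).2
      have hheads : u'.term = u''.term := by
        have h1 := p'.support_eq_cons
        have h2 := q'.support_eq_cons
        rw [h1, h2, List.map_cons, List.map_cons] at htail
        exact (List.cons.injEq _ _ _ _ ▸ htail).1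
      have : u' = u'' := neighbor_term_inj hp hq hheads
      subst this
      rw [ih q' htail]

/-- The ball as a set of vertices. -/
def ballSet (G : SimpleGraph V) (v : V) (r : ℕ) : Set V :=
  {u | G.Reachable v u ∧ G.dist v u ≤ r}

lemma walk_of_chain : ∀ (l : List V) (h : l ≠ []), l.Chain' G.Adj →
    ∃ p : G.Walk (l.head h) (l.getLast h), p.length + 1 = l.length := by
  intro l
  induction l with
  | nil => intro h; exact absurd rfl h
  | cons a t ih =>
    intro h hc
    cases t with
    | nil => exact ⟨Walk.nil, by simp⟩
    | cons b t' =>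
      rw [List.Chain', List.isChain_cons_cons] at hc
      obtain ⟨p, hp⟩ := ih (by simp) hc.2
      refine ⟨Walk.cons hc.1 (p.copy rfl (by simp [List.getLast])), by show (p.copy _ _).length + 1 + 1 = _; exact (congrArg (· + 1 + 1) (Walk.length_copy p _ _)).trans (by simpa using hp)⟩

lemma term_mem (w : NBWalk G v r) : w.term ∈ ballSet G v r := by
  obtain ⟨p, hp⟩ := walk_of_chain w.toList w.ne_nil w.chain
  constructor
  · exact ⟨p.copy w.head_eq rfl⟩
  · calc G.dist v w.term ≤ (p.copy w.head_eq rfl).length := SimpleGraph.dist_le _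
    _ ≤ r := by rw [Walk.length_copy]; have := w.length_le; omega

/-- Projection of a walk in the unraveled ball to a walk in the ball. -/
def projWalk : ∀ {a b : NBWalk G v r}, (unravBall G v r).Walk a b →
    (G.induce (ballSet G v r)).Walk ⟨a.term, term_mem a⟩ ⟨b.term, term_mem b⟩
  | _, _, Walk.nil => Walk.nil
  | _, _, Walk.cons h p => Walk.cons (by simpa using adj_term h) (projWalk p)

lemma projWalk_length {a b : NBWalk G v r} (p : (unravBall G v r).Walk a b) :
    (projWalk p).length = p.length := by
  induction p with
  | nil => rfl
  | cons h p ih => simp [projWalk, ih]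

lemma projWalk_support {a b : NBWalk G v r} (p : (unravBall G v r).Walk a b) :
    (projWalk p).support = p.support.map (fun w => ⟨w.term, term_mem w⟩) := by
  induction p with
  | nil => rfl
  | cons h p ih => simp [projWalk, ih]

end Aux

/-- Closed walks at the root of the unraveled ball `G̃(v, r)` project injectively (by
taking terminal vertices) to closed walks at `v` in the ball `G(v, r)`; consequently the
ball has at least as many closed walks of each length `k` at `v`. -/
theorem unravBall_closed_walks_project_injective {V : Type*} [Fintype V] (G : SimpleGraph V)
    (v : V) (r k : ℕ) :
    Function.Injective
      (fun p : {p : (unravBall G v r).Walk (nbRoot G v r) (nbRoot G v r) // p.length = k} =>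
        p.1.support.map NBWalk.term) ∧
    Fintype.card {p : (unravBall G v r).Walk (nbRoot G v r) (nbRoot G v r) // p.length = k}
      ≤ Fintype.card
          {q : (G.induce {u | G.Reachable v u ∧ G.dist v u ≤ r}).Walk
                ⟨v, ⟨SimpleGraph.Reachable.refl v, by rw [SimpleGraph.dist_self]; exact Nat.zero_le r⟩⟩
                ⟨v, ⟨SimpleGraph.Reachable.refl v, by rw [SimpleGraph.dist_self]; exact Nat.zero_le r⟩⟩ // q.length = k} := by
  have hinj : Function.Injective
      (fun p : {p : (unravBall G v r).Walk (nbRoot G v r) (nbRoot G v r) // p.length = k} =>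
        p.1.support.map NBWalk.term) := by
    rintro ⟨p, hp⟩ ⟨q, hq⟩ h
    exact Subtype.ext (walk_term_inj p q h)
  refine ⟨hinj, ?_⟩
  have hroot : (nbRoot G v r).term = v := rfl
  have hset : ballSet G v r = {u | G.Reachable v u ∧ G.dist v u ≤ r} := rfl
  have hrooteq : (⟨(nbRoot G v r).term, term_mem (nbRoot G v r)⟩ :
      {u | G.Reachable v u ∧ G.dist v u ≤ r}) =
      ⟨v, ⟨SimpleGraph.Reachable.refl v, by rw [SimpleGraph.dist_self]; exact Nat.zero_le r⟩⟩ :=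
    Subtype.ext rfl
  refine Fintype.card_le_of_injective
    (fun p => ⟨(projWalk p.1).copy hrooteq hrooteq, by exact (Walk.length_copy _ _ _).trans ((projWalk_length _).trans p.2)⟩) ?_
  rintro ⟨p, hp⟩ ⟨q, hq⟩ h
  have h' : (projWalk p).copy hrooteq hrooteq = (projWalk q).copy hrooteq hrooteq :=
    congrArg Subtype.val h
  have hsupp : (projWalk p).support = (projWalk q).support := by
    have := congrArg Walk.support h'
    exact (Walk.support_copy _ _ _).symm.trans (this.trans (Walk.support_copy _ _ _))
  rw [projWalk_support, projWalk_support] at hsupp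
  have hterm : p.support.map NBWalk.term = q.support.map NBWalk.term := by
    have := congrArg (List.map Subtype.val) hsupp
    simpa [List.map_map, Function.comp_def] using this
  exact Subtype.ext (walk_term_inj p q hterm)
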